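/- Let $\mathcal{O} \subset \mathbb{R}^d$ be an open set such that for every $X \in \mathcal{O}$, $|B_\varepsilon(X) \cap \mathcal{O}| \geq c |B_\varepsilon(X)|$ for some constant $c > 0$. Then for any locally $L^2$ function $f$ and any $1 \le p \le 2$, one has $\|f\|_{L^p(\mathcal{O})} \leq C \|M_\varepsilon(f)\|_{L^p(\mathcal{O})}$, where the constant $C$ depends only on $d$, $p$, and $c$. -/

import Mathlib

open MeasureTheory Metric Set ENNReal

/-- The ε-scale L² average operator `M_ε(f)(X) = (⨍_{B_ε(X)} |f|²)^{1/2}`. -/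
noncomputable def Mavg {d : ℕ} (t : ℝ) (f : EuclideanSpace ℝ (Fin d) → ℝ)
    (X : EuclideanSpace ℝ (Fin d)) : ℝ :=
  (⨍ Y in ball X t, (f Y) ^ 2) ^ (1 / 2 : ℝ)

/-- If the open set `O` has interior measure density `c` at scale `ε`, then
`‖f‖_{L^p(O)} ≤ C ‖M_ε f‖_{L^p(O)}` for `1 ≤ p ≤ 2`, with `C = C(d, p, c)`. -/
theorem stmt0 (d : ℕ) (p : ℝ≥0∞) (hp1 : 1 ≤ p) (hp2 : p ≤ 2) (c : ℝ) (hc : 0 < c) :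
    ∃ C : ℝ, 0 < C ∧
      ∀ (O : Set (EuclideanSpace ℝ (Fin d))), IsOpen O →
      ∀ ε : ℝ, 0 < ε →
      (∀ X ∈ O, ENNReal.ofReal c * volume (ball X ε) ≤ volume (ball X ε ∩ O)) →
      ∀ f : EuclideanSpace ℝ (Fin d) → ℝ,
        LocallyIntegrable (fun Y => (f Y) ^ 2) volume →
        eLpNorm f p (volume.restrict O) ≤
          ENNReal.ofReal C * eLpNorm (Mavg ε f) p (volume.restrict O) := by
  classical
  refine ⟨max 1 c⁻¹, lt_of_lt_of_le one_pos (le_max_left _ _), ?_⟩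
  intro O hO ε hε hdens f hloc
  have hp0 : p ≠ 0 := (lt_of_lt_of_le one_pos hp1).ne'
  have hptop : p ≠ ∞ := (lt_of_le_of_lt hp2 (by norm_num)).ne
  set q : ℝ := p.toReal with hqdef
  have hq1 : (1 : ℝ) ≤ q := by
    have := ENNReal.toReal_mono hptop hp1
    simpa using this
  have hq2 : q ≤ 2 := by
    have := ENNReal.toReal_mono (by norm_num : (2 : ℝ≥0∞) ≠ ∞) hp2
    simpa using this
  have hq0 : (0 : ℝ) < q := lt_of_lt_of_le one_pos hq1
  -- measurable version of `ofReal (f ^ 2)`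
  have hfm : AEMeasurable (fun Y : EuclideanSpace ℝ (Fin d) => ENNReal.ofReal (f Y ^ 2)) volume :=
    ENNReal.measurable_ofReal.comp_aemeasurable hloc.aestronglyMeasurable.aemeasurable
  set g : EuclideanSpace ℝ (Fin d) → ℝ≥0∞ := hfm.mk _ with hgdef
  have hgmeas : Measurable g := hfm.measurable_mk
  have hgae : (fun Y => ENNReal.ofReal (f Y ^ 2)) =ᵐ[volume] g := hfm.ae_eq_mk
  set V : ℝ≥0∞ := volume (ball (0 : EuclideanSpace ℝ (Fin d)) ε) with hVdef
  have hball : ∀ X : EuclideanSpace ℝ (Fin d), volume (ball X ε) = V := fun X =>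
    Measure.addHaar_ball_center volume X ε
  have hV0 : V ≠ 0 := (measure_ball_pos volume 0 hε).ne'
  have hVtop : V ≠ ∞ := measure_ball_lt_top.ne
  have hint : ∀ X, IntegrableOn (fun Y => f Y ^ 2) (ball X ε) volume := fun X =>
    (hloc.integrableOn_isCompact (isCompact_closedBall X ε)).mono_set ball_subset_closedBall
  -- pointwise: ‖f Y‖₊ ^ q = ofReal (f Y ^ 2) ^ (q / 2)
  have henorm : ∀ Y, ((‖f Y‖₊ : ℝ≥0∞)) ^ q = ENNReal.ofReal (f Y ^ 2) ^ (q / 2) := by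
    intro Y
    have h1 : ENNReal.ofReal (f Y ^ 2) = ((‖f Y‖₊ : ℝ≥0∞)) ^ (2 : ℝ) := by
      rw [← enorm_eq_nnnorm, Real.enorm_eq_ofReal_abs, ENNReal.ofReal_rpow_of_nonneg (abs_nonneg _)
        (by norm_num : (0:ℝ) ≤ 2)]
      congr 1
      rw [show (2:ℝ) = ((2:ℕ):ℝ) by norm_num, Real.rpow_natCast, sq_abs]
    rw [h1, ← ENNReal.rpow_mul]
    congr 1
    ring
  -- pointwise identity for the maximal function
  have hMvg : ∀ X, ((‖Mavg ε f X‖₊ : ℝ≥0∞)) ^ q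
      = ((∫⁻ Y in ball X ε, g Y) / V) ^ (q / 2) := by
    intro X
    have havg0 : (0:ℝ) ≤ ⨍ Y in ball X ε, f Y ^ 2 := by
      rw [setAverage_eq]
      exact smul_nonneg (inv_nonneg.2 ENNReal.toReal_nonneg)
        (integral_nonneg fun Y => sq_nonneg _)
    have hM0 : (0:ℝ) ≤ Mavg ε f X := Real.rpow_nonneg havg0 _
    have h2 : (‖Mavg ε f X‖₊ : ℝ≥0∞)
        = ENNReal.ofReal (⨍ Y in ball X ε, f Y ^ 2) ^ (1 / 2 : ℝ) := by
      rw [← enorm_eq_nnnorm, Real.enorm_eq_ofReal hM0]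
      unfold Mavg
      rw [ENNReal.ofReal_rpow_of_nonneg havg0 (by norm_num)]
    have h3 : ENNReal.ofReal (⨍ Y in ball X ε, f Y ^ 2) = (∫⁻ Y in ball X ε, g Y) / V := by
      rw [setAverage_eq, smul_eq_mul, measureReal_def,
        ENNReal.ofReal_mul (inv_nonneg.2 ENNReal.toReal_nonneg),
        ofReal_integral_eq_lintegral_ofReal (hint X) (ae_of_all _ fun Y => sq_nonneg _),
        lintegral_congr_ae (ae_restrict_of_ae hgae), hball X,
        ENNReal.ofReal_inv_of_pos (ENNReal.toReal_pos hV0 hVtop),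
        ENNReal.ofReal_toReal hVtop, div_eq_mul_inv, mul_comm]
    rw [h2, h3, ← ENNReal.rpow_mul]
    congr 1
    ring
  -- eLpNorm as lintegrals
  have hLHS : eLpNorm f p (volume.restrict O) = (∫⁻ Y in O, g Y ^ (q / 2)) ^ (1 / q) := by
    rw [eLpNorm_eq_lintegral_rpow_enorm_toReal hp0 hptop]
    congr 1
    refine lintegral_congr_ae ?_
    filter_upwards [ae_restrict_of_ae hgae] with Y hY
    rw [enorm_eq_nnnorm, ← hqdef, henorm Y, hY]
  have hRHS : eLpNorm (Mavg ε f) p (volume.restrict O)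
      = (∫⁻ X in O, ((∫⁻ Y in ball X ε, g Y) / V) ^ (q / 2)) ^ (1 / q) := by
    rw [eLpNorm_eq_lintegral_rpow_enorm_toReal hp0 hptop]
    congr 1
    exact lintegral_congr fun X => hMvg X
  -- geometric setup for Fubini
  set T : Set (EuclideanSpace ℝ (Fin d) × EuclideanSpace ℝ (Fin d)) :=
    (O ×ˢ O) ∩ {z | z.2 ∈ ball z.1 ε} with hTdef
  have hTmeas : MeasurableSet T := by
    refine (hO.measurableSet.prod hO.measurableSet).inter ?_
    have hcont : Continuous fun z : EuclideanSpace ℝ (Fin d) × EuclideanSpace ℝ (Fin d) =>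
        dist z.2 z.1 := continuous_dist.comp (continuous_snd.prodMk continuous_fst)
    have : IsOpen {z : EuclideanSpace ℝ (Fin d) × EuclideanSpace ℝ (Fin d) |
        z.2 ∈ ball z.1 ε} := by
      simpa [mem_ball] using isOpen_lt hcont continuous_const
    exact this.measurableSet
  set F : EuclideanSpace ℝ (Fin d) → EuclideanSpace ℝ (Fin d) → ℝ≥0∞ :=
    fun x y => T.indicator (fun z => g z.2 ^ (q / 2)) (x, y) with hFdef
  have hswap : ∫⁻ x, ∫⁻ y, F x y = ∫⁻ y, ∫⁻ x, F x y := by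
    refine lintegral_lintegral_swap ?_
    have huncurry : Function.uncurry F = T.indicator fun z => g z.2 ^ (q / 2) :=
      funext fun z => by simp [hFdef, Function.uncurry]
    rw [huncurry]
    exact (((hgmeas.comp measurable_snd).pow_const _).indicator hTmeas).aemeasurable
  have E2 : ∫⁻ x, ∫⁻ y, F x y = ∫⁻ x in O, ∫⁻ y in O ∩ ball x ε, g y ^ (q / 2) := by
    rw [← lintegral_indicator hO.measurableSet]
    refine lintegral_congr fun x => ?_
    by_cases hx : x ∈ O
    · rw [indicator_of_mem hx, ← lintegral_indicator (hO.measurableSet.inter measurableSet_ball)]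
      refine lintegral_congr fun y => ?_
      by_cases hy : y ∈ O ∩ ball x ε
      · rw [indicator_of_mem hy]
        have hmem : (x, y) ∈ T := ⟨⟨hx, hy.1⟩, hy.2⟩
        exact indicator_of_mem hmem _
      · rw [indicator_of_notMem hy]
        exact indicator_of_notMem (fun hmem => hy ⟨hmem.1.2, hmem.2⟩) _
    · rw [indicator_of_notMem hx]
      have hz : ∀ y, F x y = 0 := fun y =>
        indicator_of_notMem (fun hmem => hx hmem.1.1) _
      simp [hz]
  have E1 : ∫⁻ y, ∫⁻ x, F x y = ∫⁻ y in O, volume (ball y ε ∩ O) * g y ^ (q / 2) := by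
    rw [← lintegral_indicator hO.measurableSet]
    refine lintegral_congr fun y => ?_
    by_cases hy : y ∈ O
    · rw [indicator_of_mem hy]
      have hxeq : ∀ x, F x y = (ball y ε ∩ O).indicator (fun _ => g y ^ (q / 2)) x := by
        intro x
        by_cases hx : x ∈ ball y ε ∩ O
        · rw [indicator_of_mem hx]
          have hmem : (x, y) ∈ T := ⟨⟨hx.2, hy⟩, mem_ball_comm.mp hx.1⟩
          exact indicator_of_mem hmem _
        · rw [indicator_of_notMem hx]
          exact indicator_of_notMem (fun hmem => hx ⟨mem_ball_comm.mp hmem.2, hmem.1.1⟩) _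
      calc ∫⁻ x, F x y = ∫⁻ x, (ball y ε ∩ O).indicator (fun _ => g y ^ (q / 2)) x :=
            lintegral_congr hxeq
        _ = ∫⁻ _ in ball y ε ∩ O, g y ^ (q / 2) :=
            lintegral_indicator (measurableSet_ball.inter hO.measurableSet) _
        _ = volume (ball y ε ∩ O) * g y ^ (q / 2) := by
            rw [setLIntegral_const, mul_comm]
    · rw [indicator_of_notMem hy]
      have hz : ∀ x, F x y = 0 := fun x =>
        indicator_of_notMem (fun hmem => hy hmem.1.2) _
      simp [hz]
  have A1 : ENNReal.ofReal c * V * ∫⁻ Y in O, g Y ^ (q / 2)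
      ≤ ∫⁻ Y in O, volume (ball Y ε ∩ O) * g Y ^ (q / 2) := by
    rw [← lintegral_const_mul' _ _ (ENNReal.mul_ne_top ENNReal.ofReal_ne_top hVtop)]
    refine lintegral_mono_ae ?_
    filter_upwards [ae_restrict_mem hO.measurableSet] with Y hY
    have hd := hdens Y hY
    rw [hball Y] at hd
    exact mul_le_mul_left hd _
  have hgfin : ∀ X, (∫⁻ Y in ball X ε, g Y) ≠ ∞ := by
    intro X
    rw [← lintegral_congr_ae (ae_restrict_of_ae hgae)]
    refine ne_of_lt (lt_of_le_of_lt (lintegral_mono fun Y => Real.ofReal_le_enorm _) ?_)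
    exact (hint X).2
  have B : ∀ X, (∫⁻ Y in ball X ε, g Y ^ (q / 2))
      ≤ (∫⁻ Y in ball X ε, g Y) ^ (q / 2) * V ^ (1 - q / 2) := by
    intro X
    rcases eq_or_lt_of_le hq2 with h2 | h2
    · have e1 : q / 2 = 1 := by rw [h2]; norm_num
      have e2 : 1 - q / 2 = 0 := by rw [e1]; norm_num
      simp [e1, e2]
    · have hr1 : (1 : ℝ) < 2 / q := (one_lt_div hq0).2 h2
      have hconj := Real.HolderConjugate.conjExponent hr1
      set r' := Real.conjExponent (2 / q) with hr'def
      have hr'inv : 1 / r' = 1 - q / 2 := by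
        have h4 := hconj.inv_add_inv_eq_one
        have h5 : (2 / q)⁻¹ = q / 2 := by rw [inv_div]
        rw [one_div]
        linarith
      have e3 : ∀ Y : EuclideanSpace ℝ (Fin d), (g Y ^ (q / 2)) ^ (2 / q) = g Y := by
        intro Y
        rw [← ENNReal.rpow_mul, show q / 2 * (2 / q) = 1 by field_simp, ENNReal.rpow_one]
      have hH := ENNReal.lintegral_mul_le_Lp_mul_Lq (μ := volume.restrict (ball X ε)) hconj
          (f := fun Y => g Y ^ (q / 2)) (g := fun _ => (1 : ℝ≥0∞))
          ((hgmeas.pow_const _).aemeasurable) aemeasurable_const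
      simp only [Pi.mul_apply, mul_one, ENNReal.one_rpow] at hH
      refine le_trans hH (le_of_eq ?_)
      simp_rw [e3]
      rw [one_div_div]
      rw [setLIntegral_one, hball X, hr'inv]
  have halg : ∀ X : EuclideanSpace ℝ (Fin d),
      (∫⁻ Y in ball X ε, g Y) ^ (q / 2) * V ^ (1 - q / 2)
        = V * ((∫⁻ Y in ball X ε, g Y) / V) ^ (q / 2) := by
    intro X
    rw [ENNReal.div_rpow_of_nonneg _ _ (by positivity),
      ENNReal.rpow_sub _ _ hV0 hVtop, ENNReal.rpow_one]
    simp [div_eq_mul_inv, mul_comm, mul_left_comm, mul_assoc]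
  have key : ENNReal.ofReal c * V * (∫⁻ Y in O, g Y ^ (q / 2))
      ≤ V * ∫⁻ X in O, ((∫⁻ Y in ball X ε, g Y) / V) ^ (q / 2) := by
    calc ENNReal.ofReal c * V * (∫⁻ Y in O, g Y ^ (q / 2))
        ≤ ∫⁻ Y in O, volume (ball Y ε ∩ O) * g Y ^ (q / 2) := A1
      _ = ∫⁻ y, ∫⁻ x, F x y := E1.symm
      _ = ∫⁻ x, ∫⁻ y, F x y := hswap.symm
      _ = ∫⁻ x in O, ∫⁻ y in O ∩ ball x ε, g y ^ (q / 2) := E2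
      _ ≤ ∫⁻ x in O, ∫⁻ y in ball x ε, g y ^ (q / 2) :=
          lintegral_mono fun x => lintegral_mono_set inter_subset_right
      _ ≤ ∫⁻ x in O, (∫⁻ Y in ball x ε, g Y) ^ (q / 2) * V ^ (1 - q / 2) :=
          lintegral_mono fun x => B x
      _ = ∫⁻ x in O, V * ((∫⁻ Y in ball x ε, g Y) / V) ^ (q / 2) :=
          lintegral_congr fun x => halg x
      _ = V * ∫⁻ X in O, ((∫⁻ Y in ball X ε, g Y) / V) ^ (q / 2) :=
          lintegral_const_mul' _ _ hVtop
  have hc0 : ENNReal.ofReal c ≠ 0 := (ENNReal.ofReal_pos.2 hc).ne'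
  have hmain : (∫⁻ Y in O, g Y ^ (q / 2))
      ≤ (ENNReal.ofReal c)⁻¹ * ∫⁻ X in O, ((∫⁻ Y in ball X ε, g Y) / V) ^ (q / 2) := by
    have key2 : ENNReal.ofReal c * (∫⁻ Y in O, g Y ^ (q / 2))
        ≤ ∫⁻ X in O, ((∫⁻ Y in ball X ε, g Y) / V) ^ (q / 2) := by
      refine (ENNReal.mul_le_mul_iff_right hV0 hVtop).mp ?_
      calc V * (ENNReal.ofReal c * (∫⁻ Y in O, g Y ^ (q / 2)))
          = ENNReal.ofReal c * V * (∫⁻ Y in O, g Y ^ (q / 2)) := by ring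
        _ ≤ V * ∫⁻ X in O, ((∫⁻ Y in ball X ε, g Y) / V) ^ (q / 2) := key
    calc (∫⁻ Y in O, g Y ^ (q / 2))
        = (ENNReal.ofReal c)⁻¹ * (ENNReal.ofReal c * (∫⁻ Y in O, g Y ^ (q / 2))) := by
          rw [← mul_assoc, ENNReal.inv_mul_cancel hc0 ENNReal.ofReal_ne_top, one_mul]
      _ ≤ (ENNReal.ofReal c)⁻¹ * ∫⁻ X in O, ((∫⁻ Y in ball X ε, g Y) / V) ^ (q / 2) :=
          mul_le_mul_right key2 _
  -- conclude
  rw [hLHS, hRHS]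
  refine le_trans (ENNReal.rpow_le_rpow hmain (by positivity : (0:ℝ) ≤ 1 / q)) ?_
  rw [ENNReal.mul_rpow_of_nonneg _ _ (by positivity : (0:ℝ) ≤ 1 / q)]
  refine mul_le_mul_left ?_ _
  rw [← ENNReal.ofReal_inv_of_pos hc]
  rcases le_total (c⁻¹) 1 with hle1 | hle1
  · calc (ENNReal.ofReal c⁻¹) ^ (1 / q)
        ≤ (1 : ℝ≥0∞) ^ (1 / q) := by
          refine ENNReal.rpow_le_rpow ?_ (by positivity)
          simpa using ENNReal.ofReal_le_ofReal hle1
      _ = 1 := ENNReal.one_rpow _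
      _ ≤ ENNReal.ofReal (max 1 c⁻¹) := by
          rw [show (1 : ℝ≥0∞) = ENNReal.ofReal 1 by simp]
          exact ENNReal.ofReal_le_ofReal (le_max_left _ _)
  · have h1x : (1 : ℝ≥0∞) ≤ ENNReal.ofReal c⁻¹ := by
      rw [show (1 : ℝ≥0∞) = ENNReal.ofReal 1 by simp]
      exact ENNReal.ofReal_le_ofReal hle1
    calc (ENNReal.ofReal c⁻¹) ^ (1 / q)
        ≤ (ENNReal.ofReal c⁻¹) ^ (1 : ℝ) :=
          ENNReal.rpow_le_rpow_of_exponent_le h1x ((div_le_one hq0).2 hq1)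
      _ = ENNReal.ofReal c⁻¹ := ENNReal.rpow_one _
      _ ≤ ENNReal.ofReal (max 1 c⁻¹) := ENNReal.ofReal_le_ofReal (le_max_right _ _)
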